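/- Let 𝓔, 𝓕, 𝓖, 𝓗 be vector spaces over a field k and let A : 𝓔 → 𝓕, B : 𝓖 → 𝓗, P : 𝓖 → 𝓔, Q : 𝓔 → 𝓖, R : 𝓗 → 𝓕, S : 𝓕 → 𝓗, T : 𝓕 → 𝓔 be linear maps. If A is a proper silvern transmutation of B by philosopher's stone (P,Q,R,S,T), then ker B ⊆ ker(id_𝓖 − Q∘P), and there exists a linear map T̃ : 𝓗 → 𝓖 with T̃∘B = id_𝓖 − Q∘P; moreover for any such T̃, B is a proper silvern transmutation of A by philosopher's stone (Q,P,S,R,T̃), and the restriction of T̃ to the range of B is uniquely determined. -/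
import Mathlib


/-- If `A` is a proper silvern transmutation of `B` by philosopher's stone `(P,Q,R,S,T)`
(post-catalysis `A∘P = R∘B`, pre-catalysis `B∘Q = S∘A`, pre-regeneration `P∘Q + T∘A = id`,
properness `ker B ∩ ker P = 0`), then `ker B ⊆ ker (id − Q∘P)`, there exists `T̃` with
`T̃∘B = id − Q∘P`, any such `T̃` makes `B` a proper silvern transmutation of `A` by
`(Q,P,S,R,T̃)`, and `T̃` is uniquely determined on the range of `B`. -/
theorem proper_silvern_symm
    {k : Type*} [Field k]
    {E F G H : Type*}
    [AddCommGroup E] [Module k E] [AddCommGroup F] [Module k F]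
    [AddCommGroup G] [Module k G] [AddCommGroup H] [Module k H]
    (A : E →ₗ[k] F) (B : G →ₗ[k] H) (P : G →ₗ[k] E) (Q : E →ₗ[k] G)
    (R : H →ₗ[k] F) (S : F →ₗ[k] H) (T : F →ₗ[k] E)
    (hpost : A ∘ₗ P = R ∘ₗ B)
    (hpre : B ∘ₗ Q = S ∘ₗ A)
    (hreg : P ∘ₗ Q + T ∘ₗ A = LinearMap.id)
    (hproper : LinearMap.ker B ⊓ LinearMap.ker P = ⊥) :
    LinearMap.ker B ≤ LinearMap.ker (LinearMap.id - Q ∘ₗ P) ∧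
    (∃ T' : H →ₗ[k] G, T' ∘ₗ B = LinearMap.id - Q ∘ₗ P) ∧
    (∀ T' : H →ₗ[k] G, T' ∘ₗ B = LinearMap.id - Q ∘ₗ P →
      (B ∘ₗ Q = S ∘ₗ A ∧ A ∘ₗ P = R ∘ₗ B ∧
       Q ∘ₗ P + T' ∘ₗ B = LinearMap.id ∧
       LinearMap.ker A ⊓ LinearMap.ker Q = ⊥)) ∧
    (∀ T₁ T₂ : H →ₗ[k] G, T₁ ∘ₗ B = LinearMap.id - Q ∘ₗ P →
      T₂ ∘ₗ B = LinearMap.id - Q ∘ₗ P →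
      ∀ y ∈ LinearMap.range B, T₁ y = T₂ y) := by
  have hker : LinearMap.ker B ≤ LinearMap.ker (LinearMap.id - Q ∘ₗ P) := by
    intro x hx
    have hBx : B x = 0 := hx
    have hAP : A (P x) = R (B x) := LinearMap.congr_fun hpost x
    have hBQ : ∀ e, B (Q e) = S (A e) := fun e => LinearMap.congr_fun hpre e
    have hid : ∀ e, P (Q e) + T (A e) = e := fun e => LinearMap.congr_fun hreg e
    have hAPx : A (P x) = 0 := by rw [hAP, hBx, map_zero]
    have hBmem : x - Q (P x) ∈ LinearMap.ker B := by
      simp [LinearMap.mem_ker, map_sub, hBx, hBQ, hAPx]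
    have hPmem : x - Q (P x) ∈ LinearMap.ker P := by
      have h := hid (P x)
      rw [hAPx, map_zero, add_zero] at h
      simp [LinearMap.mem_ker, map_sub, h]
    have : x - Q (P x) ∈ LinearMap.ker B ⊓ LinearMap.ker P := ⟨hBmem, hPmem⟩
    rw [hproper] at this
    simpa [LinearMap.mem_ker, sub_eq_zero] using this
  have hexists : ∃ T' : H →ₗ[k] G, T' ∘ₗ B = LinearMap.id - Q ∘ₗ P := by
    set f : G →ₗ[k] G := LinearMap.id - Q ∘ₗ P with hf
    -- factor f through the range of B
    let g : LinearMap.range B →ₗ[k] G :=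
      (Submodule.liftQ (LinearMap.ker B) f hker) ∘ₗ
        (LinearMap.quotKerEquivRange B).symm.toLinearMap
    obtain ⟨T', hT'⟩ := g.exists_extend
    refine ⟨T', ?_⟩
    ext x
    have h1 : T' (B x) = g ⟨B x, LinearMap.mem_range_self B x⟩ := by
      have := LinearMap.congr_fun hT' ⟨B x, LinearMap.mem_range_self B x⟩
      simpa using this
    have h2 : (LinearMap.quotKerEquivRange B) (Submodule.Quotient.mk x) =
        ⟨B x, LinearMap.mem_range_self B x⟩ := by
      apply Subtype.ext
      simp [LinearMap.quotKerEquivRange]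
    have h3 : g ⟨B x, LinearMap.mem_range_self B x⟩ = f x := by
      simp only [g, LinearMap.comp_apply, LinearEquiv.coe_coe, ← h2,
        LinearEquiv.symm_apply_apply]
      simp
    simp only [LinearMap.comp_apply]
    rw [h1, h3]
  refine ⟨hker, hexists, ?_, ?_⟩
  · intro T' hT'
    refine ⟨hpre, hpost, ?_, ?_⟩
    · rw [hT']; ext x; simp
    · rw [eq_bot_iff]
      rintro x ⟨hA, hQ⟩
      have := LinearMap.congr_fun hreg x
      simp only [LinearMap.comp_apply, LinearMap.add_apply, LinearMap.id_apply] at this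
      have hx0 : x = 0 := by rw [← this, hA, hQ, map_zero, map_zero, add_zero]
      exact (Submodule.mem_bot k).mpr hx0
  · rintro T₁ T₂ h₁ h₂ y ⟨x, rfl⟩
    have e₁ := LinearMap.congr_fun h₁ x
    have e₂ := LinearMap.congr_fun h₂ x
    simp only [LinearMap.comp_apply] at e₁ e₂
    rw [e₁, e₂]
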